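/- If G(x) = Ax is a linear bijection of F₂ⁿ with A invertible and A not a permutation matrix, and G preserves Hamming weight mod k (|Ax| ≡ |x| (mod k) for all x ∈ {0,1}^n) for some k ≥ 2, then k = 2 or k = 4. -/

import Mathlib

def wt {n : ℕ} (v : Fin n → ZMod 2) : ℕ :=
  (Finset.univ.filter fun i => v i = 1).card

/-- number of coordinates where both vectors are 1 -/
def inter {n : ℕ} (u v : Fin n → ZMod 2) : ℕ :=
  (Finset.univ.filter fun i => u i = 1 ∧ v i = 1).card

lemma zmod2_cases : ∀ a : ZMod 2, a = 0 ∨ a = 1 := by decide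

lemma wt_add {n : ℕ} (u v : Fin n → ZMod 2) :
    wt (u + v) + 2 * inter u v = wt u + wt v := by
  classical
  set s := Finset.univ.filter fun i => u i = 1 with hs
  set t := Finset.univ.filter fun i => v i = 1 with ht
  have h1 : (Finset.univ.filter fun i => (u + v) i = 1) = (s ∪ t) \ (s ∩ t) := by
    ext i
    rcases zmod2_cases (u i) with h | h <;> rcases zmod2_cases (v i) with h2 | h2 <;>
      simp [hs, ht, Pi.add_apply, h, h2]
  have h2 : (Finset.univ.filter fun i => u i = 1 ∧ v i = 1) = s ∩ t := by
    ext i; simp [hs, ht]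
  have hsub : s ∩ t ⊆ s ∪ t := (Finset.inter_subset_left).trans Finset.subset_union_left
  have h3 : ((s ∪ t) \ (s ∩ t)).card = (s ∪ t).card - (s ∩ t).card :=
    Finset.card_sdiff_of_subset hsub
  have h4 : (s ∩ t).card ≤ (s ∪ t).card := Finset.card_le_card hsub
  have h5 : (s ∪ t).card + (s ∩ t).card = s.card + t.card :=
    Finset.card_union_add_card_inter s t
  unfold wt inter
  rw [h1, h2, h3, ← hs, ← ht]
  omega

theorem stmt_7 (n : ℕ) (A : Matrix (Fin n) (Fin n) (ZMod 2)) (hA : IsUnit A)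
    (hnp : ¬∃ σ : Equiv.Perm (Fin n), ∀ i j, A i j = if σ j = i then 1 else 0)
    (k : ℕ) (hk : 2 ≤ k)
    (h : ∀ x : Fin n → ZMod 2, wt (A.mulVec x) ≡ wt x [MOD k]) :
    k = 2 ∨ k = 4 := by
  classical
  by_contra hcon
  push_neg at hcon
  obtain ⟨hk2, hk4⟩ := hcon
  -- set up m
  set m : ℕ := if 2 ∣ k then k / 2 else k with hm
  have hm3 : 3 ≤ m := by
    rcases Nat.even_or_odd k with he | ho
    · have : 2 ∣ k := he.two_dvd
      simp only [hm, if_pos this]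
      omega
    · have : ¬ 2 ∣ k := by simpa [Nat.odd_iff, Nat.two_dvd_ne_zero] using ho
      simp only [hm, if_neg this]
      omega
  have hdvd : ∀ d : ℤ, (k : ℤ) ∣ 2 * d → (m : ℤ) ∣ d := by
    intro d hd
    by_cases h2 : 2 ∣ k
    · obtain ⟨c, hc⟩ := h2
      have h2' : 2 ∣ k := ⟨c, hc⟩
      have hmk : m = c := by rw [hm, if_pos h2']; omega
      have hkm : (k : ℤ) = 2 * m := by rw [hmk]; exact_mod_cast hc
      rw [hkm] at hd
      exact (mul_dvd_mul_iff_left (by norm_num : (2:ℤ) ≠ 0)).mp hd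
    · have hmk : m = k := by simp [hm, if_neg h2]
      have hcop : IsCoprime (k : ℤ) 2 := by
        rw [Int.isCoprime_iff_gcd_eq_one]
        have hg : Nat.gcd k 2 = 1 := by
          rcases (Nat.dvd_prime Nat.prime_two).mp (Nat.gcd_dvd_right k 2) with h1 | h1
          · exact h1
          · exact absurd (h1 ▸ Nat.gcd_dvd_left k 2) h2
        simpa [Int.gcd] using hg
      rw [hmk]
      exact hcop.dvd_of_dvd_mul_left hd
  -- inverse matrix
  obtain ⟨B, hBA, hAB⟩ : ∃ B, B * A = 1 ∧ A * B = 1 := by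
    obtain ⟨u, hu⟩ := hA
    refine ⟨↑u⁻¹, ?_, ?_⟩
    · rw [← hu, ← Units.val_mul, inv_mul_cancel, Units.val_one]
    · rw [← hu, ← Units.val_mul, mul_inv_cancel, Units.val_one]
  have hinj : Function.Injective A.mulVec := by
    intro x y hxy
    have := congrArg B.mulVec hxy
    simpa [Matrix.mulVec_mulVec, hBA] using this
  have hsurj : ∀ z, A.mulVec (B.mulVec z) = z := by
    intro z; simp [Matrix.mulVec_mulVec, hAB]
  -- key modular relation on intersections
  have key : ∀ x y : Fin n → ZMod 2,
      (m : ℤ) ∣ (inter (A.mulVec x) (A.mulVec y) : ℤ) - inter x y := by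
    intro x y
    apply hdvd
    have e1 := wt_add (A.mulVec x) (A.mulVec y)
    have e2 := wt_add x y
    have hx := (h x).dvd
    have hy := (h y).dvd
    have hxy := (h (x + y)).dvd
    rw [Matrix.mulVec_add] at hxy
    have hcomb := dvd_sub hxy (dvd_add hx hy)
    have heq : ((wt (x + y) : ℤ) - wt (A.mulVec x + A.mulVec y))
        - (((wt x : ℤ) - wt (A.mulVec x)) + ((wt y : ℤ) - wt (A.mulVec y)))
        = 2 * ((inter (A.mulVec x) (A.mulVec y) : ℤ) - inter x y) := by
      omega
    rw [heq] at hcomb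
    exact hcomb
  -- columns
  have hcol : ∀ j, A.mulVec (Pi.single j 1) = fun i => A i j := by
    intro j; ext i; simp [Matrix.mulVec_single]
  -- every column has weight ≤ 1
  have hwt1 : ∀ j : Fin n, wt (fun i => A i j) ≤ 1 := by
    intro j
    by_contra hge
    push_neg at hge
    obtain ⟨i1, hi1, i2, hi2, hne⟩ := Finset.one_lt_card.mp hge
    simp only [Finset.mem_filter] at hi1 hi2
    set z : Fin n → ZMod 2 := fun i => if i = i1 ∨ i = i2 then 1 else 0 with hz
    have hkey := key (B.mulVec z) (Pi.single j 1)
    rw [hsurj, hcol] at hkey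
    have hz2 : inter z (fun i => A i j) = 2 := by
      unfold inter
      have : (Finset.univ.filter fun i => z i = 1 ∧ A i j = 1) = {i1, i2} := by
        ext i
        simp only [Finset.mem_filter, Finset.mem_univ, true_and, Finset.mem_insert,
          Finset.mem_singleton, hz]
        constructor
        · rintro ⟨h1, -⟩
          by_contra hc
          push_neg at hc
          simp [hc.1, hc.2] at h1
        · rintro (rfl | rfl) <;> simp [hi1.2, hi2.2]
      rw [this, Finset.card_insert_of_notMem (by simpa using hne), Finset.card_singleton]
    have hle : inter (B.mulVec z) (Pi.single j 1) ≤ 1 := by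
      unfold inter
      have : (Finset.univ.filter fun i => (B.mulVec z) i = 1 ∧ (Pi.single j 1 : Fin n → ZMod 2) i = 1) ⊆ {j} := by
        intro i hi
        simp only [Finset.mem_filter] at hi
        simp only [Finset.mem_singleton]
        by_contra hij
        simp [Pi.single_apply, hij] at hi
      simpa using Finset.card_le_card this
    rw [hz2] at hkey
    have hfin : (m : ℤ) ∣ 2 - (inter (B.mulVec z) (Pi.single j 1) : ℤ) := by
      exact_mod_cast hkey
    have hpos : (0:ℤ) < 2 - (inter (B.mulVec z) (Pi.single j 1) : ℤ) := by
      omega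
    have := Int.le_of_dvd hpos hfin
    omega
  -- every column is nonzero, hence weight exactly 1
  have hwt : ∀ j : Fin n, ∃! i, A i j = 1 := by
    intro j
    have hne : (fun i => A i j) ≠ 0 := by
      intro hc
      have : A.mulVec (Pi.single j 1) = A.mulVec 0 := by
        rw [hcol, hc]; simp
      have := hinj this
      have := congrFun this j
      simp [Pi.single_apply] at this
    have hpos : 1 ≤ wt (fun i => A i j) := by
      rcases Nat.eq_zero_or_pos (wt fun i => A i j) with h0 | hp
      · exfalso
        apply hne
        funext i
        rcases zmod2_cases (A i j) with ha | ha
        · simpa using ha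
        · exfalso
          have : i ∈ Finset.univ.filter fun i => A i j = 1 := by simp [ha]
          rw [Finset.card_eq_zero.mp h0] at this
          simp at this
      · exact hp
    have hcard : (Finset.univ.filter fun i => A i j = 1).card = 1 := le_antisymm (hwt1 j) hpos
    obtain ⟨i, hi⟩ := Finset.card_eq_one.mp hcard
    refine ⟨i, ?_, ?_⟩
    · have : i ∈ Finset.univ.filter fun i => A i j = 1 := by rw [hi]; simp
      simpa using this
    · intro i' hi'
      have : i' ∈ Finset.univ.filter fun i => A i j = 1 := by simp [hi']
      rw [hi] at this
      simpa using this
  -- build the permutation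
  apply hnp
  set f : Fin n → Fin n := fun j => (hwt j).choose with hf
  have hf1 : ∀ j, A (f j) j = 1 := fun j => (hwt j).choose_spec.1
  have hf2 : ∀ j i, A i j = 1 → i = f j := fun j i hij => (hwt j).choose_spec.2 i hij
  have hentry : ∀ i j, A i j = if f j = i then 1 else 0 := by
    intro i j
    by_cases hij : f j = i
    · rw [if_pos hij, ← hij]; exact hf1 j
    · rw [if_neg hij]
      rcases zmod2_cases (A i j) with ha | ha
      · exact ha
      · exact absurd ((hf2 j i ha).symm) hij
  have hfinj : Function.Injective f := by
    intro j1 j2 hj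
    have hc : (fun i => A i j1) = fun i => A i j2 := by
      funext i
      rw [hentry i j1, hentry i j2, hj]
    have : A.mulVec (Pi.single j1 1) = A.mulVec (Pi.single j2 1) := by
      rw [hcol, hcol, hc]
    have := congrFun (hinj this) j1
    simp [Pi.single_apply] at this
    by_contra hne
    exact hne this
  exact ⟨Equiv.ofBijective f (Finite.injective_iff_bijective.mp hfinj),
    fun i j => by simpa using hentry i j⟩
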